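/- Let P₁ = |ψ₁⟩⟨ψ₁| and P₂ = |ψ₂⟩⟨ψ₂| be one-dimensional projections onto orthogonal unit vectors ψ₁ ⟂ ψ₂. Let C and C' be two-outcome observables with C(i) ≥ Pᵢ and C'(i) ≥ Pᵢ for i = 1,2. If C ⪯ C' (i.e. C = p∗C' for some 2×2 Markov kernel p), then C = C'. -/

import Mathlib

noncomputable section

open scoped BigOperators

variable {H : Type*} [NormedAddCommGroup H] [InnerProductSpace ℂ H] [CompleteSpace H]

/-- A Markov kernel from `Ω₂` to `Ω₁`: nonnegative entries, columns summing to 1. -/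
def IsMarkov {Ω₁ Ω₂ : Type*} [Fintype Ω₁] (p : Ω₁ → Ω₂ → ℝ) : Prop :=
  (∀ x y, 0 ≤ p x y) ∧ ∀ y, ∑ x, p x y = 1

/-- A finite-outcome observable (POVM): positive operators summing to the identity. -/
def IsObservable {Ω : Type*} [Fintype Ω] (A : Ω → H →L[ℂ] H) : Prop :=
  (∀ x, (A x).IsPositive) ∧ ∑ x, A x = 1

/-- Post-processing of `A` by the kernel `p`. -/
def pproc {Ω₁ Ω₂ : Type*} [Fintype Ω₂] (p : Ω₁ → Ω₂ → ℝ) (A : Ω₂ → H →L[ℂ] H) :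
    Ω₁ → H →L[ℂ] H := fun x => ∑ y, (p x y : ℂ) • A y

/-- `A ⪯ B` : `A` is a post-processing of `B`. -/
def PP {Ω₁ Ω₂ : Type*} [Fintype Ω₁] [Fintype Ω₂] (A : Ω₁ → H →L[ℂ] H)
    (B : Ω₂ → H →L[ℂ] H) : Prop := ∃ p, IsMarkov p ∧ A = pproc p B

/-- `G` is a joint observable of the observables `A ℓ`. -/
def IsJoint {n : ℕ} {Ω : Fin n → Type*} [∀ ℓ, Fintype (Ω ℓ)] [∀ ℓ, DecidableEq (Ω ℓ)]
    (A : ∀ ℓ, Ω ℓ → H →L[ℂ] H) (G : (∀ ℓ, Ω ℓ) → H →L[ℂ] H) : Prop :=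
  IsObservable G ∧ ∀ ℓ xℓ, (∑ x : ∀ ℓ, Ω ℓ, if x ℓ = xℓ then G x else 0) = A ℓ xℓ

/-- Two-outcome observables discriminating a pair of orthogonal pure states:
if `C ⪯ C'` then `C = C'`. -/
theorem discriminating_postprocessing_eq (ψ : Fin 2 → H) (hunit : ∀ i, ‖ψ i‖ = 1)
    (horth : inner (𝕜 := ℂ) (ψ 0) (ψ 1) = 0)
    (C C' : Fin 2 → H →L[ℂ] H) (hC : IsObservable C) (hC' : IsObservable C')
    (hCge : ∀ i, (C i - (innerSL ℂ (ψ i)).smulRight (ψ i)).IsPositive)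
    (hC'ge : ∀ i, (C' i - (innerSL ℂ (ψ i)).smulRight (ψ i)).IsPositive)
    (h : PP C C') : C = C' := by
  obtain ⟨p, ⟨hpnn, hpsum⟩, hCeq⟩ := h
  set P : Fin 2 → H →L[ℂ] H := fun i => (innerSL ℂ (ψ i)).smulRight (ψ i) with hP
  have hPval : ∀ i, RCLike.re (inner ℂ (ψ i) (P i (ψ i)) : ℂ) = 1 := by
    intro i
    simp [hP, ContinuousLinearMap.smulRight_apply, innerSL_apply_apply, inner_smul_right,
      inner_self_eq_norm_sq_to_K, hunit i]
  have key : ∀ (D : Fin 2 → H →L[ℂ] H), IsObservable D →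
      (∀ i, (D i - P i).IsPositive) →
      ∀ i j, RCLike.re (inner ℂ (ψ i) (D j (ψ i)) : ℂ) = if j = i then 1 else 0 := by
    intro D hD hDge i j
    have hge : ∀ k, (1:ℝ) ≤ RCLike.re (inner ℂ (ψ k) (D k (ψ k)) : ℂ) := by
      intro k
      have h1 := (hDge k).2 (ψ k)
      rw [ContinuousLinearMap.reApplyInnerSelf] at h1
      have h2 : RCLike.re (inner ℂ ((D k - P k) (ψ k)) (ψ k) : ℂ)
          = RCLike.re (inner ℂ (ψ k) (D k (ψ k)) : ℂ) - 1 := by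
        rw [inner_re_symm]
        simp only [ContinuousLinearMap.sub_apply, inner_sub_right, map_sub]
        rw [hPval k]
      rw [h2] at h1; linarith
    have hnn : ∀ k l, (0:ℝ) ≤ RCLike.re (inner ℂ (ψ k) (D l (ψ k)) : ℂ) := by
      intro k l
      have h1 := (hD.1 l).2 (ψ k)
      rwa [ContinuousLinearMap.reApplyInnerSelf, inner_re_symm] at h1
    have hsum : ∀ k, RCLike.re (inner ℂ (ψ k) (D 0 (ψ k)) : ℂ)
        + RCLike.re (inner ℂ (ψ k) (D 1 (ψ k)) : ℂ) = 1 := by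
      intro k
      have h1 := hD.2
      rw [Fin.sum_univ_two] at h1
      have h2 : D 0 (ψ k) + D 1 (ψ k) = ψ k := by
        have := congrArg (fun T : H →L[ℂ] H => T (ψ k)) h1
        simpa using this
      have h3 : (inner ℂ (ψ k) (D 0 (ψ k)) : ℂ) + inner ℂ (ψ k) (D 1 (ψ k)) = inner ℂ (ψ k) (ψ k) := by
        rw [← inner_add_right, h2]
      have h4 := congrArg RCLike.re h3
      simp [inner_self_eq_norm_sq_to_K, hunit k] at h4
      rw [← h4]; simp
    have e00 : RCLike.re (inner ℂ (ψ 0) (D 0 (ψ 0)) : ℂ) = 1 := by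
      linarith [hge 0, hnn 0 1, hsum 0]
    have e01 : RCLike.re (inner ℂ (ψ 0) (D 1 (ψ 0)) : ℂ) = 0 := by
      linarith [hge 0, hnn 0 1, hsum 0]
    have e11 : RCLike.re (inner ℂ (ψ 1) (D 1 (ψ 1)) : ℂ) = 1 := by
      linarith [hge 1, hnn 1 0, hsum 1]
    have e10 : RCLike.re (inner ℂ (ψ 1) (D 0 (ψ 1)) : ℂ) = 0 := by
      linarith [hge 1, hnn 1 0, hsum 1]
    fin_cases i <;> fin_cases j <;>
      [simpa using e00; simpa using e01; simpa using e10; simpa using e11]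
  have rC' := key C' hC' hC'ge
  have rC := key C hC hCge
  have happ : ∀ i, RCLike.re (inner ℂ (ψ i) (C i (ψ i)) : ℂ)
      = p i 0 * RCLike.re (inner ℂ (ψ i) (C' 0 (ψ i)) : ℂ)
      + p i 1 * RCLike.re (inner ℂ (ψ i) (C' 1 (ψ i)) : ℂ) := by
    intro i
    have h1 : C i (ψ i) = (p i 0 : ℂ) • C' 0 (ψ i) + (p i 1 : ℂ) • C' 1 (ψ i) := by
      rw [hCeq]; simp [pproc, Fin.sum_univ_two]
    rw [h1, inner_add_right, inner_smul_right, inner_smul_right]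
    simp
  have hp00 : p 0 0 = 1 := by
    have := happ 0
    rw [rC 0 0, rC' 0 0, rC' 0 1] at this
    simpa using this.symm
  have hp11 : p 1 1 = 1 := by
    have := happ 1
    rw [rC 1 1, rC' 1 0, rC' 1 1] at this
    simpa using this.symm
  have hp10 : p 1 0 = 0 := by have := hpsum 0; rw [Fin.sum_univ_two] at this; linarith
  have hp01 : p 0 1 = 0 := by have := hpsum 1; rw [Fin.sum_univ_two] at this; linarith
  funext i
  rw [hCeq]
  fin_cases i <;> simp [pproc, Fin.sum_univ_two, hp00, hp01, hp10, hp11]
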